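/- If a bistochastic matrix P achieves strong equal treatment for the Example PS profile, then P(1,m1) = P(2,m1) ≤ 1/2, and consequently P_PS dominates P with respect to the profile (i.e., for every player i and every prefix length ℓ, the prefix sum of P_PS's row i along player i's preference is at least that of P). -/

import Mathlib

open Finset

/-- Items m1,m2,m3,m4 encoded as 0,1,2,3. Example PS preference profile. -/
def exO : Fin 4 → Fin 4 → Fin 4 :=
  ![![0, 2, 1, 3], ![0, 3, 1, 2], ![1, 2, 0, 3], ![1, 3, 0, 2]]

def isBistochastic (P : Matrix (Fin 4) (Fin 4) ℝ) : Prop :=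
  (∀ i j, 0 ≤ P i j) ∧ (∀ i, ∑ j, P i j = 1) ∧ (∀ j, ∑ i, P i j = 1)

def strongEqualTreatment (P : Matrix (Fin 4) (Fin 4) ℝ) : Prop :=
  ∀ i i' : Fin 4, ∀ ℓ : Fin 4, (∀ k ≤ ℓ, exO i k = exO i' k) →
    ∀ k ≤ ℓ, P i (exO i k) = P i' (exO i' k)

noncomputable def P_PS : Matrix (Fin 4) (Fin 4) ℝ :=
  !![1/2, 0, 1/2, 0; 1/2, 0, 0, 1/2; 0, 1/2, 1/2, 0; 0, 1/2, 0, 1/2]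


lemma sumIic0 (f : Fin 4 → ℝ) : ∑ x ∈ Finset.Iic (0:Fin 4), f x = f 0 := by
  rw [show Finset.Iic (0:Fin 4) = {0} by decide]; simp

lemma sumIic1 (f : Fin 4 → ℝ) : ∑ x ∈ Finset.Iic (1:Fin 4), f x = f 0 + f 1 := by
  rw [show Finset.Iic (1:Fin 4) = {0,1} by decide]
  rw [Finset.sum_insert (by decide), Finset.sum_singleton]

lemma sumIic2 (f : Fin 4 → ℝ) : ∑ x ∈ Finset.Iic (2:Fin 4), f x = f 0 + f 1 + f 2 := by
  rw [show Finset.Iic (2:Fin 4) = {0,1,2} by decide]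
  rw [Finset.sum_insert (by decide), Finset.sum_insert (by decide), Finset.sum_singleton]; ring

lemma sumIic3 (f : Fin 4 → ℝ) : ∑ x ∈ Finset.Iic (3:Fin 4), f x = f 0 + f 1 + f 2 + f 3 := by
  rw [show Finset.Iic (3:Fin 4) = {0,1,2,3} by decide]
  rw [Finset.sum_insert (by decide), Finset.sum_insert (by decide),
    Finset.sum_insert (by decide), Finset.sum_singleton]; ring

theorem stmt5 (P : Matrix (Fin 4) (Fin 4) ℝ)
    (hbi : isBistochastic P) (hset : strongEqualTreatment P) :
    P 0 0 = P 1 0 ∧ P 0 0 ≤ 1/2 ∧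
    (∀ i : Fin 4, ∀ ℓ : Fin 4,
      ∑ k ∈ Finset.Iic ℓ, P i (exO i k) ≤ ∑ k ∈ Finset.Iic ℓ, P_PS i (exO i k)) := by

  obtain ⟨hpos, hrow, hcol⟩ := hbi
  have h01 : P 0 0 = P 1 0 := by
    have := hset 0 1 0 (by decide) 0 (le_refl _)
    simpa [exO] using this
  have h23 : P 2 1 = P 3 1 := by
    have := hset 2 3 0 (by decide) 0 (le_refl _)
    simpa [exO] using this
  have hc0 := hcol 0
  have hc1 := hcol 1
  rw [Fin.sum_univ_four] at hc0 hc1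
  have hb0 : P 0 0 ≤ 1/2 := by
    have := hpos 2 0; have := hpos 3 0; linarith
  have hb2 : P 2 1 ≤ 1/2 := by
    have := hpos 0 1; have := hpos 1 1; linarith
  refine ⟨h01, hb0, ?_⟩
  intro i ℓ
  have hr := hrow i
  rw [Fin.sum_univ_four] at hr
  fin_cases i <;> fin_cases ℓ <;>
    simp only [Fin.isValue, Fin.mk_zero, Fin.mk_one, Fin.reduceFinMk,
      sumIic0, sumIic1, sumIic2, sumIic3] at hr ⊢ <;>
    norm_num [exO, P_PS, Matrix.vecHead, Matrix.vecTail, Matrix.cons_val_succ, Matrix.cons_val_two, Matrix.cons_val_three] at hr ⊢ <;>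
    linarith [hpos 0 0, hpos 0 1, hpos 0 2, hpos 0 3, hpos 1 0, hpos 1 1, hpos 1 2, hpos 1 3,
      hpos 2 0, hpos 2 1, hpos 2 2, hpos 2 3, hpos 3 0, hpos 3 1, hpos 3 2, hpos 3 3]
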